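/- Let α > 0 and s ≥ 0 be real numbers, and let ν be a real number. Suppose (A_{2n})_{n≥0} and (B_{2n})_{n≥1} are real sequences, each not identically zero, which decay exponentially (i.e., there exist C > 0 and 0 < r < 1 with |A_{2n}| ≤ C rⁿ and |B_{2n}| ≤ C rⁿ for all n) and which satisfy the recurrence relations: ν A_0 + 2α(s+1) A_2 = 0; 4α(s−1) A_0 + (ν−4) A_2 + 2α(s+3) A_4 = 0; 2α(s−2k+1) A_{2k−2} + (ν−4k²) A_{2k} + 2α(s+2k+1) A_{2k+2} = 0 for all k ≥ 2; (ν−4) B_2 + 2α(s+3) B_4 = 0; and 2α(s−2k+1) B_{2k−2} + (ν−4k²) B_{2k} + 2α(s+2k+1) B_{2k+2} = 0 for all k ≥ 2. Then s is an odd nonnegative integer. -/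

import Mathlib

set_option maxHeartbeats 1600000


/-- If the Whittaker–Hill recurrences for the Fourier coefficients of a
nontrivial even π-periodic solution `(A n = A_{2n})_{n ≥ 0}` and a nontrivial odd
π-periodic solution `(B n = B_{2n})_{n ≥ 1}` both admit exponentially decaying
solutions, then `s` is an odd nonnegative integer. -/
theorem whittaker_hill_coexistence_forces_odd_integer
    (α s ν : ℝ) (hα : 0 < α) (hs : 0 ≤ s)
    (A B : ℕ → ℝ)
    (hA_ne : ∃ n : ℕ, A n ≠ 0)
    (hB_ne : ∃ n : ℕ, 1 ≤ n ∧ B n ≠ 0)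
    (hdecay : ∃ C : ℝ, 0 < C ∧ ∃ r : ℝ, 0 < r ∧ r < 1 ∧
      (∀ n : ℕ, |A n| ≤ C * r ^ n) ∧ (∀ n : ℕ, |B n| ≤ C * r ^ n))
    (hA0 : ν * A 0 + 2 * α * (s + 1) * A 1 = 0)
    (hA1 : 4 * α * (s - 1) * A 0 + (ν - 4) * A 1 + 2 * α * (s + 3) * A 2 = 0)
    (hArec : ∀ k : ℕ, 2 ≤ k →
      2 * α * (s - 2 * (k : ℝ) + 1) * A (k - 1) + (ν - 4 * (k : ℝ) ^ 2) * A k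
        + 2 * α * (s + 2 * (k : ℝ) + 1) * A (k + 1) = 0)
    (hB1 : (ν - 4) * B 1 + 2 * α * (s + 3) * B 2 = 0)
    (hBrec : ∀ k : ℕ, 2 ≤ k →
      2 * α * (s - 2 * (k : ℝ) + 1) * B (k - 1) + (ν - 4 * (k : ℝ) ^ 2) * B k
        + 2 * α * (s + 2 * (k : ℝ) + 1) * B (k + 1) = 0) :
    ∃ m : ℕ, s = 2 * (m : ℝ) + 1 := by
  by_contra hcon
  push_neg at hcon
  obtain ⟨C, hC, r, hr0, hr1, hAd, hBd⟩ := hdecay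
  have h2α : (2 * α) ≠ 0 := by positivity
  -- s is not of the form 2k-1 for any k ≥ 1
  have hodd : ∀ k : ℕ, 1 ≤ k → s - 2 * (k : ℝ) + 1 ≠ 0 := by
    intro k hk h
    apply hcon (k - 1)
    have hc : ((k - 1 : ℕ) : ℝ) = (k : ℝ) - 1 := by
      have := Nat.cast_sub hk (R := ℝ); simpa using this
    rw [hc]; linarith
  have hs1 : s - 1 ≠ 0 := by
    have := hodd 1 le_rfl; push_cast at this; intro h; apply this; linarith
  -- the discrete Wronskian
  set D : ℕ → ℝ := fun k => A k * B (k + 1) - A (k + 1) * B k with hD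
  -- recurrence for D
  have hDrec : ∀ j : ℕ, 1 ≤ j →
      (s + 2 * (j : ℝ) + 3) * D (j + 1) = (s - 2 * (j : ℝ) - 1) * D j := by
    intro j hj
    have h1 := hArec (j + 1) (by omega)
    have h2 := hBrec (j + 1) (by omega)
    simp only [Nat.add_sub_cancel] at h1 h2
    push_cast at h1 h2
    have key : (2 * α) * ((s + 2 * (j : ℝ) + 3) * D (j + 1)) =
        (2 * α) * ((s - 2 * (j : ℝ) - 1) * D j) := by
      simp only [hD]
      linear_combination A (j + 1) * h2 - B (j + 1) * h1
    exact mul_left_cancel₀ h2α key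
  have hcpos : ∀ j : ℕ, (0:ℝ) < s + 2 * (j : ℝ) + 3 := by
    intro j; positivity
  -- Step 1: D 1 = 0
  have hD1 : D 1 = 0 := by
    by_contra hD1
    -- all D j ≠ 0 for j ≥ 1
    have hDne : ∀ j : ℕ, 1 ≤ j → D j ≠ 0 := by
      intro j hj
      induction j with
      | zero => omega
      | succ n ih =>
        rcases Nat.eq_or_lt_of_le hj with h | h
        · simpa [← h] using hD1
        · have hn : 1 ≤ n := by omega
          have hrec := hDrec n hn
          have hne : s - 2 * (n : ℝ) - 1 ≠ 0 := by
            have := hodd (n + 1) (by omega); push_cast at this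
            intro h; apply this; linarith
          intro h0
          rw [h0, mul_zero] at hrec
          exact ih hn (by
            have := mul_eq_zero.mp hrec.symm
            rcases this with h | h
            · exact absurd h hne
            · exact h)
    set ρ : ℝ := (1 + r ^ 2) / 2 with hρ
    have hρ0 : 0 < ρ := by positivity
    have hρ1 : ρ < 1 := by nlinarith
    have hrρ : r ^ 2 < ρ := by nlinarith
    -- choose N beyond which ratio ≥ ρ
    have h1ρ : (0:ℝ) < 1 - ρ := by linarith
    obtain ⟨N, hNge⟩ := exists_nat_ge (max 1 ((s + ρ * s + 3 * ρ + 1) / (2 * (1 - ρ))))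
    have hN1 : 1 ≤ N := by
      have : (1:ℝ) ≤ (N:ℝ) := le_trans (le_max_left _ _) hNge
      exact_mod_cast this
    have hN0' : (s + ρ * s + 3 * ρ + 1) / (2 * (1 - ρ)) ≤ (N:ℝ) :=
      le_trans (le_max_right _ _) hNge
    have hratio : ∀ j : ℕ, N ≤ j → ρ * (s + 2 * (j : ℝ) + 3) ≤ |s - 2 * (j : ℝ) - 1| := by
      intro j hj
      have hjN : (N : ℝ) ≤ (j : ℝ) := by exact_mod_cast hj
      have hkey : s + ρ * s + 3 * ρ + 1 ≤ 2 * (j : ℝ) * (1 - ρ) := by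
        rw [div_le_iff₀ (by positivity)] at hN0'
        nlinarith
      have : ρ * (s + 2 * (j : ℝ) + 3) ≤ 2 * (j : ℝ) + 1 - s := by nlinarith
      calc ρ * (s + 2 * (j : ℝ) + 3) ≤ 2 * (j : ℝ) + 1 - s := this
        _ = -(s - 2 * (j : ℝ) - 1) := by ring
        _ ≤ |s - 2 * (j : ℝ) - 1| := neg_le_abs _
    -- geometric lower bound
    have hlow : ∀ m : ℕ, |D N| * ρ ^ m ≤ |D (N + m)| := by
      intro m
      induction m with
      | zero => simp
      | succ m ih =>
        have hj : N ≤ N + m := by omega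
        have hrec := hDrec (N + m) (by omega)
        push_cast at hrec
        have habs : (s + 2 * ((N:ℝ) + m) + 3) * |D (N + m + 1)| =
            |s - 2 * ((N:ℝ) + m) - 1| * |D (N + m)| := by
          have := congrArg abs hrec
          rwa [abs_mul, abs_mul, abs_of_pos (by positivity)] at this
        have hr2 := hratio (N + m) hj
        push_cast at hr2
        have hpos : (0:ℝ) < s + 2 * ((N:ℝ) + m) + 3 := by positivity
        have h3 : ρ * |D (N + m)| ≤ |D (N + m + 1)| := by
          rcases le_or_gt (ρ * |D (N + m)|) (|D (N + m + 1)|) with h | h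
          · exact h
          · exfalso
            nlinarith [abs_nonneg (D (N + m)), abs_nonneg (D (N + m + 1))]
        calc |D N| * ρ ^ (m + 1) = ρ * (|D N| * ρ ^ m) := by ring
          _ ≤ ρ * |D (N + m)| := by
              apply mul_le_mul_of_nonneg_left ih (le_of_lt hρ0)
          _ ≤ |D (N + m + 1)| := h3
          _ = |D (N + (m + 1))| := by ring_nf
    -- exponential upper bound
    have hup : ∀ k : ℕ, |D k| ≤ 2 * C ^ 2 * (r ^ 2) ^ k := by
      intro k
      have h1 : |D k| ≤ |A k| * |B (k+1)| + |A (k+1)| * |B k| := by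
        simp only [hD]
        calc |A k * B (k + 1) - A (k + 1) * B k|
            ≤ |A k * B (k + 1)| + |A (k + 1) * B k| := abs_sub _ _
          _ = |A k| * |B (k+1)| + |A (k+1)| * |B k| := by rw [abs_mul, abs_mul]
      have h2 : |A k| * |B (k+1)| ≤ (C * r ^ k) * (C * r ^ (k+1)) :=
        mul_le_mul (hAd k) (hBd (k+1)) (abs_nonneg _) (by positivity)
      have h3 : |A (k+1)| * |B k| ≤ (C * r ^ (k+1)) * (C * r ^ k) :=
        mul_le_mul (hAd (k+1)) (hBd k) (abs_nonneg _) (by positivity)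
      have hrk : (C * r ^ k) * (C * r ^ (k+1)) ≤ C ^ 2 * (r ^ 2) ^ k := by
        have heq : (C * r ^ k) * (C * r ^ (k+1)) = (C ^ 2 * (r^2)^k) * r := by ring
        rw [heq]
        have hnn : (0:ℝ) ≤ C ^ 2 * (r ^ 2) ^ k := by positivity
        nlinarith
      linarith [hrk, h2, h3]
    -- contradiction
    have hDN : 0 < |D N| := abs_pos.mpr (hDne N hN1)
    have hq1 : r ^ 2 / ρ < 1 := (div_lt_one hρ0).mpr hrρ
    have hq0 : 0 ≤ r ^ 2 / ρ := by positivity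
    obtain ⟨m, hm⟩ := exists_pow_lt_of_lt_one
      (show (0:ℝ) < |D N| / (2 * C ^ 2 * (r ^ 2) ^ N) by positivity) hq1
    have hchain : |D N| * ρ ^ m ≤ 2 * C ^ 2 * (r ^ 2) ^ (N + m) := le_trans (hlow m) (hup (N + m))
    have hfact : (r ^ 2) ^ (N + m) = (r ^ 2) ^ N * (r ^ 2 / ρ) ^ m * ρ ^ m := by
      rw [pow_add, div_pow, mul_assoc, div_mul_cancel₀]
      positivity
    rw [hfact] at hchain
    have hρm : 0 < ρ ^ m := pow_pos hρ0 m
    have h5 : |D N| ≤ 2 * C ^ 2 * (r ^ 2) ^ N * (r ^ 2 / ρ) ^ m := by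
      have := (mul_le_mul_iff_left₀ hρm).mp (by linarith [hchain] :
        |D N| * ρ ^ m ≤ (2 * C ^ 2 * (r ^ 2) ^ N * (r ^ 2 / ρ) ^ m) * ρ ^ m)
      exact this
    have h6 : 2 * C ^ 2 * (r ^ 2) ^ N * (r ^ 2 / ρ) ^ m <
        2 * C ^ 2 * (r ^ 2) ^ N * (|D N| / (2 * C ^ 2 * (r ^ 2) ^ N)) := by
      apply mul_lt_mul_of_pos_left hm (by positivity)
    rw [mul_div_cancel₀ _ (by positivity : (2 * C ^ 2 * (r ^ 2) ^ N) ≠ 0)] at h6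
    linarith
  -- Step 2: from D 1 = 0 get A 0 * B 1 = 0
  have hkey : 4 * α * (s - 1) * (A 0 * B 1) = 2 * α * (s + 3) * D 1 := by
    simp only [hD]
    linear_combination B 1 * hA1 - A 1 * hB1
  rw [hD1, mul_zero] at hkey
  have hAB : A 0 * B 1 = 0 := by
    have h4 : 4 * α * (s - 1) ≠ 0 := by
      intro h
      rcases mul_eq_zero.mp h with h | h
      · nlinarith
      · exact hs1 h
    exact (mul_eq_zero.mp hkey).resolve_left h4
  rcases mul_eq_zero.mp hAB with hA0z | hB1z
  · -- A is identically zero, contradiction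
    have hA1z : A 1 = 0 := by
      rw [hA0z] at hA0
      have : 2 * α * (s + 1) ≠ 0 := by positivity
      have := mul_eq_zero.mp (by linarith [hA0] : 2 * α * (s + 1) * A 1 = 0)
      tauto
    have hA2z : A 2 = 0 := by
      rw [hA0z, hA1z] at hA1
      have h3 : 2 * α * (s + 3) ≠ 0 := by positivity
      have := mul_eq_zero.mp (by linarith [hA1] : 2 * α * (s + 3) * A 2 = 0)
      tauto
    have hall : ∀ n : ℕ, A n = 0 ∧ A (n + 1) = 0 ∧ A (n + 2) = 0 := by
      intro n
      induction n with
      | zero => exact ⟨hA0z, hA1z, hA2z⟩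
      | succ n ih =>
        obtain ⟨h0, h1, h2⟩ := ih
        refine ⟨h1, h2, ?_⟩
        have hrec := hArec (n + 2) (by omega)
        rw [show n + 2 - 1 = n + 1 from rfl, h1, h2] at hrec
        have hc : 2 * α * (s + 2 * ((n + 2 : ℕ) : ℝ) + 1) ≠ 0 := by
          have : (0:ℝ) ≤ ((n + 2 : ℕ) : ℝ) := Nat.cast_nonneg _
          positivity
        have := mul_eq_zero.mp (by linarith [hrec] :
          2 * α * (s + 2 * ((n + 2 : ℕ) : ℝ) + 1) * A (n + 2 + 1) = 0)
        rcases this with h | h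
        · exact absurd h hc
        · exact h
    obtain ⟨n, hn⟩ := hA_ne
    exact hn (hall n).1
  · -- B is identically zero (for n ≥ 1), contradiction
    have hB2z : B 2 = 0 := by
      rw [hB1z] at hB1
      have h3 : 2 * α * (s + 3) ≠ 0 := by positivity
      have := mul_eq_zero.mp (by linarith [hB1] : 2 * α * (s + 3) * B 2 = 0)
      tauto
    have hall : ∀ n : ℕ, B (n + 1) = 0 ∧ B (n + 2) = 0 := by
      intro n
      induction n with
      | zero => exact ⟨hB1z, hB2z⟩
      | succ n ih =>
        obtain ⟨h1, h2⟩ := ih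
        refine ⟨h2, ?_⟩
        have hrec := hBrec (n + 2) (by omega)
        rw [show n + 2 - 1 = n + 1 from rfl, h1, h2] at hrec
        have hc : 2 * α * (s + 2 * ((n + 2 : ℕ) : ℝ) + 1) ≠ 0 := by
          have : (0:ℝ) ≤ ((n + 2 : ℕ) : ℝ) := Nat.cast_nonneg _
          positivity
        have := mul_eq_zero.mp (by linarith [hrec] :
          2 * α * (s + 2 * ((n + 2 : ℕ) : ℝ) + 1) * B (n + 2 + 1) = 0)
        rcases this with h | h
        · exact absurd h hc
        · exact h
    obtain ⟨n, hn1, hn⟩ := hB_ne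
    obtain ⟨m, rfl⟩ := Nat.exists_eq_add_of_le hn1
    exact hn (by simpa [Nat.add_comm] using (hall m).1)
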